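/- Let (K, ≤) be an ordered field and L an extension field of K. The ordering of K extends to an ordering of L if and only if -1 is not expressible as a sum of elements of the form a·x² with a ∈ K, a ≥ 0, and x ∈ L. -/

import Mathlib

/-- An ordering (positive cone) of a field `L`. -/
def IsOrdering {L : Type*} [Field L] (P : Set L) : Prop :=
  (∀ a ∈ P, ∀ b ∈ P, a + b ∈ P) ∧ (∀ a ∈ P, ∀ b ∈ P, a * b ∈ P) ∧
    (∀ a : L, a ∈ P ∨ -a ∈ P) ∧ (∀ a : L, a ∈ P → -a ∈ P → a = 0)

section Aux

variable {K L : Type*} [Field K] [LinearOrder K] [IsStrictOrderedRing K] [Field L] [Algebra K L]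

/-- The generating set: elements of the form `a·x²` with `a ≥ 0`. -/
private def gensSet (K L : Type*) [Field K] [LinearOrder K] [IsStrictOrderedRing K] [Field L] [Algebra K L] : Set L :=
  {t | ∃ a : K, ∃ x : L, 0 ≤ a ∧ t = algebraMap K L a * x ^ 2}

private lemma gens_mul {y z : L} (hy : y ∈ gensSet K L) (hz : z ∈ gensSet K L) :
    y * z ∈ gensSet K L := by
  obtain ⟨a, x, ha, rfl⟩ := hy
  obtain ⟨b, w, hb, rfl⟩ := hz
  exact ⟨a * b, x * w, mul_nonneg ha hb, by rw [map_mul]; ring⟩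

private lemma sq_mem_gens (x : L) : x ^ 2 ∈ gensSet K L :=
  ⟨1, x, zero_le_one, by simp⟩

/-- Sum representation predicate. -/
private def HasRep (y : L) : Prop :=
  ∃ (n : ℕ) (a : Fin n → K) (x : Fin n → L),
    (∀ i, 0 ≤ a i) ∧ y = ∑ i, algebraMap K L (a i) * x i ^ 2

private lemma mem_closure_iff_hasRep {y : L} :
    y ∈ AddSubmonoid.closure (gensSet K L) ↔ HasRep (K := K) y := by
  constructor
  · intro hy
    induction hy using AddSubmonoid.closure_induction with
    | mem t ht =>
      obtain ⟨a, x, ha, rfl⟩ := ht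
      exact ⟨1, fun _ => a, fun _ => x, fun _ => ha, by simp⟩
    | zero => exact ⟨0, Fin.elim0, Fin.elim0, fun i => i.elim0, by simp⟩
    | add u v hu hv ihu ihv =>
      obtain ⟨n, a₁, x₁, ha₁, rfl⟩ := ihu
      obtain ⟨m, a₂, x₂, ha₂, rfl⟩ := ihv
      refine ⟨n + m, Fin.append a₁ a₂, Fin.append x₁ x₂, fun i => ?_, ?_⟩
      · exact i.addCases (fun i => by simpa using ha₁ i) (fun i => by simpa using ha₂ i)
      · rw [Fin.sum_univ_add]
        simp
  · rintro ⟨n, a, x, ha, rfl⟩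
    exact AddSubmonoid.sum_mem _ fun i _ =>
      AddSubmonoid.subset_closure ⟨a i, x i, ha i, rfl⟩

end Aux

/-- The ordering of an ordered field `K` extends to an extension field `L` iff `-1`
is not a sum of elements `a·x²` with `a ∈ K`, `a ≥ 0`, `x ∈ L`. -/
theorem stmt2 {K L : Type*} [Field K] [LinearOrder K] [IsStrictOrderedRing K] [Field L] [Algebra K L] :
    (∃ P : Set L, IsOrdering P ∧ ∀ a : K, 0 ≤ a → algebraMap K L a ∈ P) ↔
      ¬ ∃ (n : ℕ) (a : Fin n → K) (x : Fin n → L),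
        (∀ i, 0 ≤ a i) ∧ (-1 : L) = ∑ i, algebraMap K L (a i) * x i ^ 2 := by
  constructor
  · rintro ⟨P, ⟨hadd, hmul, htot, hsupp⟩, hext⟩ ⟨n, a, x, ha, hsum⟩
    have h1 : (1 : L) ∈ P := by simpa using hext 1 zero_le_one
    have hneg1 : (-1 : L) ∈ P := by
      rw [hsum]
      refine Finset.sum_induction _ (· ∈ P) (fun a b ha hb => hadd a ha b hb) ?_ ?_
      · have := htot 0; simpa using this
      · intro i _
        refine hmul _ (hext (a i) (ha i)) _ ?_
        rcases htot (x i) with h | h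
        · simpa [sq] using hmul _ h _ h
        · have := hmul _ h _ h; simpa [sq] using this
    exact one_ne_zero (hsupp 1 h1 hneg1)
  · intro hno
    -- the preordering of sums of a·x²
    set T : Set L := ((AddSubmonoid.closure (gensSet K L) : AddSubmonoid L) : Set L) with hT
    have hTadd : ∀ a ∈ T, ∀ b ∈ T, a + b ∈ T := fun a ha b hb => add_mem ha hb
    have hTmul : ∀ a ∈ T, ∀ b ∈ T, a * b ∈ T := by
      intro u hu v hv
      induction hu, hv using AddSubmonoid.closure_induction₂ with
      | mem u v hu hv => exact AddSubmonoid.subset_closure (gens_mul hu hv)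
      | zero_left v hv => simpa [hT] using zero_mem _
      | zero_right v hv => simpa [hT] using zero_mem _
      | add_left u₁ u₂ v h₁ h₂ h₃ ih₁ ih₂ => simpa [hT, add_mul] using add_mem ih₁ ih₂
      | add_right u₁ u₂ v h₁ h₂ h₃ ih₁ ih₂ => simpa [hT, mul_add] using add_mem ih₁ ih₂
    have hsqT : ∀ x : L, x ^ 2 ∈ T := fun x =>
      AddSubmonoid.subset_closure (sq_mem_gens x)
    have hTneg : (-1 : L) ∉ T := fun h => hno (mem_closure_iff_hasRep.mp h)
    -- Zorn's lemma on preorderings containing T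
    set S : Set (Set L) :=
      {P | T ⊆ P ∧ (∀ a ∈ P, ∀ b ∈ P, a + b ∈ P) ∧ (∀ a ∈ P, ∀ b ∈ P, a * b ∈ P) ∧
        (-1 : L) ∉ P} with hS
    have hchains : ∀ c ⊆ S, IsChain (· ⊆ ·) c → c.Nonempty →
        ∃ ub ∈ S, ∀ s ∈ c, s ⊆ ub := by
      intro c hcS hchain hcne
      refine ⟨⋃₀ c, ⟨?_, ?_, ?_, ?_⟩, fun s hs => Set.subset_sUnion_of_mem hs⟩
      · obtain ⟨s, hs⟩ := hcne
        exact (hcS hs).1.trans (Set.subset_sUnion_of_mem hs)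
      · rintro u ⟨s, hs, hus⟩ v ⟨t, ht, hvt⟩
        rcases hchain.total hs ht with h | h
        · exact ⟨t, ht, (hcS ht).2.1 u (h hus) v hvt⟩
        · exact ⟨s, hs, (hcS hs).2.1 u hus v (h hvt)⟩
      · rintro u ⟨s, hs, hus⟩ v ⟨t, ht, hvt⟩
        rcases hchain.total hs ht with h | h
        · exact ⟨t, ht, (hcS ht).2.2.1 u (h hus) v hvt⟩
        · exact ⟨s, hs, (hcS hs).2.2.1 u hus v (h hvt)⟩
      · rintro ⟨s, hs, hneg⟩
        exact (hcS hs).2.2.2 hneg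
    obtain ⟨P, hTP, hPS, hPmax⟩ :
        ∃ P, T ⊆ P ∧ P ∈ S ∧ ∀ Q ∈ S, P ⊆ Q → Q = P := by
      obtain ⟨P, hTP, hmax⟩ := zorn_subset_nonempty S hchains T
        ⟨subset_rfl, hTadd, hTmul, hTneg⟩
      exact ⟨P, hTP, hmax.1, fun Q hQ hPQ => subset_antisymm (hmax.2 hQ hPQ) hPQ⟩
    obtain ⟨hTP', hPadd, hPmul, hPneg⟩ := hPS
    have h0P : (0 : L) ∈ P := hTP (zero_mem _)
    have h1P : (1 : L) ∈ P := hTP (by simpa using hsqT 1)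
    -- key step: maximality gives totality
    have htot : ∀ b : L, b ∈ P ∨ -b ∈ P := by
      intro b
      by_cases hnb : -b ∈ P
      · exact Or.inr hnb
      left
      -- consider Q = P + b·P
      set Q : Set L := {y | ∃ p ∈ P, ∃ q ∈ P, y = p + b * q} with hQ
      have hPQ : P ⊆ Q := fun p hp => ⟨p, hp, 0, h0P, by ring⟩
      have hQS : Q ∈ S := by
        refine ⟨hTP'.trans hPQ, ?_, ?_, ?_⟩
        · rintro u ⟨p, hp, q, hq, rfl⟩ v ⟨p', hp', q', hq', rfl⟩
          exact ⟨p + p', hPadd _ hp _ hp', q + q', hPadd _ hq _ hq', by ring⟩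
        · rintro u ⟨p, hp, q, hq, rfl⟩ v ⟨p', hp', q', hq', rfl⟩
          refine ⟨p * p' + b ^ 2 * (q * q'), ?_, p * q' + p' * q, ?_, by ring⟩
          · exact hPadd _ (hPmul _ hp _ hp') _
              (hPmul _ (hTP (hsqT b)) _ (hPmul _ hq _ hq'))
          · exact hPadd _ (hPmul _ hp _ hq') _ (hPmul _ hp' _ hq)
        · rintro ⟨p, hp, q, hq, hpq⟩
          by_cases hq0 : q = 0
          · exact hPneg (by rw [hpq, hq0]; simpa using hp)
          · apply hnb
            have key : -b = (1 + p) * q * (q⁻¹) ^ 2 := by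
              rw [show 1 + p = -b * q by linear_combination -hpq, inv_pow, ← div_eq_mul_inv,
                eq_div_iff (pow_ne_zero 2 hq0)]
              ring
            rw [key]
            exact hPmul _ (hPmul _ (hPadd _ h1P _ hp) _ hq) _ (hTP (hsqT q⁻¹))
      have : Q = P := hPmax Q hQS hPQ
      rw [← this]
      exact ⟨0, h0P, 1, h1P, by ring⟩
    refine ⟨P, ⟨hPadd, hPmul, htot, ?_⟩, ?_⟩
    · intro a haP hnaP
      by_contra ha0
      apply hPneg
      have : (-1 : L) = a * -a * (a⁻¹) ^ 2 := by field_simp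
      rw [this]
      exact hPmul _ (hPmul _ haP _ hnaP) _ (hTP (hsqT a⁻¹))
    · intro a ha
      exact hTP <| AddSubmonoid.subset_closure ⟨a, 1, ha, by simp⟩
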